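/- Let S be a collection of strings of length k, let B be the BWT of S (the array of symbols preceding the lexicographically sorted suffixes of S) and let B_l be the array of symbols preceding the sorted l-suffixes. Let X be the sorted array of all suffixes and X_l the sorted array of l-suffixes. Then the encoding I_B of B as an interleave of B_0,...,B_k equals the encoding I_X of X as an interleave of X_0,...,X_k. -/

import Mathlib

open scoped Classical

/-- Symbol type for suffixes: ranked sentinels (ordered by (suffix length, string index))
below all regular alphabet symbols. -/
abbrev SSym (A : Type*) := (ℕ ×ₗ ℕ) ⊕ₗ A

variable {A : Type*} [LinearOrder A] {m k : ℕ}

/-- `symAt s (q, l) t` is the `t`-th symbol (0-indexed) of the `l`-suffix of the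
string `s q` (a string of length `k`), padded beyond its end with its own ranked sentinel. -/
def symAt (s : Fin m → Fin k → A) (o : Fin m × Fin (k+1)) (t : ℕ) : SSym A :=
  if _h : t < (o.2 : ℕ) then
    toLex (Sum.inr (s o.1 ⟨k - (o.2 : ℕ) + t, by have := o.2.isLt; omega⟩))
  else
    toLex (Sum.inl (toLex ((o.2 : ℕ), (o.1 : ℕ))))

/-- The `p`-prefix of the suffix occurrence `o`. -/
def pprefix (s : Fin m → Fin k → A) (p : ℕ) (o : Fin m × Fin (k+1)) : List (SSym A) :=
  List.ofFn fun t : Fin p => symAt s o t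

/-- The full suffix string of occurrence `o` (its `l` symbols followed by its sentinel). -/
def suffStr (s : Fin m → Fin k → A) (o : Fin m × Fin (k+1)) : List (SSym A) :=
  List.ofFn fun t : Fin ((o.2 : ℕ) + 1) => symAt s o t

/-- The order `≺_p`: compare `p`-prefixes lexicographically, then suffix lengths,
then string indices. -/
def precP (s : Fin m → Fin k → A) (p : ℕ) (α β : Fin m × Fin (k+1)) : Prop :=
  List.Lex (· < ·) (pprefix s p α) (pprefix s p β) ∨
    (pprefix s p α = pprefix s p β ∧
      ((α.2 : ℕ) < (β.2 : ℕ) ∨ ((α.2 : ℕ) = (β.2 : ℕ) ∧ (α.1 : ℕ) < (β.1 : ℕ))))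

/-- Full lexicographic order on suffix occurrences, ties broken by length then string index. -/
def fullOrd (s : Fin m → Fin k → A) (α β : Fin m × Fin (k+1)) : Prop :=
  List.Lex (· < ·) (suffStr s α) (suffStr s β) ∨
    (suffStr s α = suffStr s β ∧
      ((α.2 : ℕ) < (β.2 : ℕ) ∨ ((α.2 : ℕ) = (β.2 : ℕ) ∧ (α.1 : ℕ) < (β.1 : ℕ))))

/-- `[b,e]` is the `p`-segment of position `i` in the sorted array `X`:
a position `j` carries the same `p`-prefix as position `i` iff `b ≤ j ≤ e`. -/
def isSeg (s : Fin m → Fin k → A) (p : ℕ) {n : ℕ}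
    (X : Fin n → Fin m × Fin (k+1)) (b e i : Fin n) : Prop :=
  b ≤ i ∧ i ≤ e ∧ ∀ j, (pprefix s p (X j) = pprefix s p (X i) ↔ b ≤ j ∧ j ≤ e)

/-- Position `i` is the start of its `p`-segment in the sorted array `X`. -/
def isStart (s : Fin m → Fin k → A) (p : ℕ) {n : ℕ}
    (X : Fin n → Fin m × Fin (k+1)) (i : Fin n) : Prop :=
  ∀ j, j < i → pprefix s p (X j) ≠ pprefix s p (X i)

/-- The symbol preceding the `l`-suffix of string `o.1` (its sentinel when `l = k`). -/
def prevSym (s : Fin m → Fin k → A) (o : Fin m × Fin (k+1)) : SSym A :=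
  if _h : (o.2 : ℕ) < k then
    toLex (Sum.inr (s o.1 ⟨k - (o.2 : ℕ) - 1, by omega⟩))
  else
    toLex (Sum.inl (toLex ((o.2 : ℕ), (o.1 : ℕ))))


lemma finset_toList_filter_perm {α : Type*} [DecidableEq α] (s : Finset α)
    (p : α → Prop) [DecidablePred p] :
    (s.filter p).toList.Perm (s.toList.filter (fun a => decide (p a))) := by
  refine Multiset.coe_eq_coe.mp ?_
  rw [Finset.toList, Finset.toList, Finset.filter_val, ← Multiset.filter_coe,
    Multiset.coe_toList, Multiset.coe_toList]

instance fullOrd_antisymm (s : Fin m → Fin k → A) :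
    IsAntisymm (Fin m × Fin (k+1)) (fullOrd s) where
  antisymm a b h1 h2 := by
    rcases h1 with h1 | ⟨e1, t1⟩ <;> rcases h2 with h2 | ⟨e2, t2⟩
    · exact absurd h2 (asymm h1)
    · rw [e2] at h1; exact absurd h1 (asymm h1)
    · rw [e1] at h2; exact absurd h2 (asymm h2)
    · omega

/-- Let `B` be the BWT of `S` (the symbols preceding the lexicographically
sorted suffixes `X`) and let `Bl l` be the symbols preceding the sorted `l`-suffixes `Xl l`.
Then the encoding of `B` as an interleave of `Bl 0, …, Bl k` equals the encoding of `X` as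
an interleave of `Xl 0, …, Xl k`: position `q` of `B`, which comes from the suffix
`X.get q` of length `(X.get q).2 = I_X q`, is the `r`-th element of `Bl (I_X q)`, where `r`
is the number of positions `≤ q` of `X` holding a suffix of that same length. -/
theorem encoding_of_bwt_eq_encoding_of_suffixes (s : Fin m → Fin k → A)
    (X : List (Fin m × Fin (k + 1)))
    (hXperm : X.Perm ((Finset.univ : Finset (Fin m × Fin (k + 1))).toList))
    (hXsort : X.Pairwise (fullOrd s))
    (Xl : Fin (k + 1) → List (Fin m × Fin (k + 1)))
    (hXlperm : ∀ l, (Xl l).Perm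
      (Finset.univ.filter (fun o : Fin m × Fin (k + 1) => o.2 = l)).toList)
    (hXlsort : ∀ l, (Xl l).Pairwise (fullOrd s))
    (B : List (SSym A)) (hB : B = X.map (prevSym s))
    (Bl : Fin (k + 1) → List (SSym A)) (hBl : ∀ l, Bl l = (Xl l).map (prevSym s)) :
    ∀ q : Fin X.length,
      B[(q : ℕ)]? =
        (Bl (X.get q).2)[((X.take ((q : ℕ) + 1)).countP (fun o => o.2 == (X.get q).2)) - 1]? := by
  intro q
  have hql : (q : ℕ) < X.length := q.isLt
  set l := (X.get q).2 with hl
  set p : Fin m × Fin (k+1) → Bool := fun o => o.2 == l with hp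
  have hpd : p = fun o => decide (o.2 = l) := by
    funext o; by_cases h : o.2 = l <;> simp [hp, h]
  have hfil : Xl l = X.filter p := by
    refine List.Perm.eq_of_pairwise (fun a b _ _ h1 h2 => (fullOrd_antisymm s).antisymm a b h1 h2) (hXlsort l) (List.Pairwise.filter p hXsort) ?_
    refine (hXlperm l).trans (List.Perm.trans ?_ (hXperm.filter p).symm)
    rw [hpd]
    exact finset_toList_filter_perm _ _
  have hpq : p (X.get q) = true := by
    simp only [hp]; exact beq_self_eq_true _
  have htake : X.take ((q : ℕ) + 1) = X.take q ++ [X.get q] := by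
    rw [List.take_succ, List.getElem?_eq_getElem hql]
    rfl
  have hftake : (X.take ((q : ℕ) + 1)).filter p = (X.take q).filter p ++ [X.get q] := by
    rw [htake, List.filter_append, List.filter_singleton, hpq, cond_true]
  have hcount : (X.take ((q : ℕ) + 1)).countP p = ((X.take q).filter p).length + 1 := by
    rw [List.countP_eq_length_filter, hftake]
    simp
  have hX : X.filter p = (X.take q).filter p ++ (X.get q :: (X.drop ((q : ℕ) + 1)).filter p) := by
    conv_lhs => rw [← List.take_append_drop ((q : ℕ) + 1) X]
    rw [List.filter_append, hftake, List.append_assoc, List.singleton_append]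
  have hget : (X.filter p)[((X.take ((q : ℕ) + 1)).countP p) - 1]? = some (X.get q) := by
    rw [hcount, Nat.add_sub_cancel, hX, List.getElem?_append_right (le_refl _),
      Nat.sub_self, List.getElem?_cons_zero]
  rw [hB, hBl, List.getElem?_map, List.getElem?_map, hfil, hget,
    List.getElem?_eq_getElem hql]
  rfl
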